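/- In the building-block request sequence (item requested at time 1, then at times Z-z+1 through Z, with z = ⌊Z/2⌋), if all requests miss, the total delayed hits latency is Z + z(z+1)/2; if the first request hits and the rest miss, the total latency is (Z+1)z - z(z+1)/2. -/

import Mathlib

/-- Earliest in-flight miss for request `t` in the delayed hits model. -/
noncomputable def pD (Z : ℕ) (σ : ℕ → ℕ) (b : ℕ → Bool) (t : ℕ) : ℕ :=
  sInf {s | max 1 (t + 1 - Z) ≤ s ∧ s ≤ t ∧ b s = false ∧ σ s = σ t}

/-- Total delayed hits latency over times `1..T` (item `0` means no request). -/
noncomputable def latN (Z T : ℕ) (σ : ℕ → ℕ) (b : ℕ → Bool) : ℕ :=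
  ∑ t ∈ Finset.Icc 1 T, if σ t = 0 ∨ b t then 0 else Z - (t - pD Z σ b t)

private lemma gauss_aux (n : ℕ) : ∑ i ∈ Finset.range n, (i + 1) = n * (n + 1) / 2 := by
  induction n with
  | zero => simp
  | succ n ih =>
    rw [Finset.sum_range_succ, ih]
    have h2 : n * (n + 1) % 2 = 0 := Nat.even_iff.mp (Nat.even_mul_succ_self n)
    have hq : (n + 1) * (n + 1 + 1) = n * (n + 1) + 2 * (n + 1) := by ring
    omega

private lemma gauss_rev (n : ℕ) : ∑ i ∈ Finset.range n, (n - i) = n * (n + 1) / 2 := by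
  have h := Finset.sum_range_reflect (fun j => j + 1) n
  rw [← gauss_aux n, ← h]
  refine Finset.sum_congr rfl fun i hi => ?_
  simp only [Finset.mem_range] at hi
  omega

private lemma sInf_eq_of (S : Set ℕ) (a : ℕ) (ha : a ∈ S) (hlb : ∀ s ∈ S, a ≤ s) :
    sInf S = a :=
  le_antisymm (Nat.sInf_le ha) (hlb _ (Nat.sInf_mem ⟨a, ha⟩))

/-- Building block: the item is requested at time `1` and at times
`Z-z+1, …, Z` with `z = ⌊Z/2⌋`.  If all requests miss the total latency is
`Z + z(z+1)/2`; if the first request hits and the rest miss it is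
`(Z+1)z - z(z+1)/2`. -/
theorem building_block_latencies (Z : ℕ) (hZ : 1 ≤ Z) :
    latN Z Z (fun t => if t = 1 ∨ (Z - Z / 2 + 1 ≤ t ∧ t ≤ Z) then 1 else 0)
        (fun _ => false)
      = Z + (Z / 2) * (Z / 2 + 1) / 2 ∧
    latN Z Z (fun t => if t = 1 ∨ (Z - Z / 2 + 1 ≤ t ∧ t ≤ Z) then 1 else 0)
        (fun t => decide (t = 1))
      = (Z + 1) * (Z / 2) - (Z / 2) * (Z / 2 + 1) / 2 := by
  set σ : ℕ → ℕ := fun t => if t = 1 ∨ (Z - Z / 2 + 1 ≤ t ∧ t ≤ Z) then 1 else 0 with hσ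
  have hσ_eq : ∀ s, σ s = 1 ↔ (s = 1 ∨ (Z - Z / 2 + 1 ≤ s ∧ s ≤ Z)) := by
    intro s
    simp only [hσ]
    split <;> simp_all
  have hσ_eq0 : ∀ s, σ s ≠ 1 → σ s = 0 := by
    intro s h
    simp only [hσ] at h ⊢
    split_ifs at h ⊢ <;> omega
  have pD1 : ∀ t, 1 ≤ t → t ≤ Z → σ t = 1 →
      pD Z σ (fun _ => false) t = 1 := by
    intro t h1 h2 h3
    unfold pD
    apply sInf_eq_of
    · refine ⟨?_, h1, rfl, ?_⟩
      · simp only [max_le_iff]; omega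
      · rw [h3, hσ_eq]; left; rfl
    · intro s hs
      exact le_trans (le_max_left _ _) hs.1
  have pD2 : ∀ t, Z - Z / 2 + 1 ≤ t → t ≤ Z →
      pD Z σ (fun t => decide (t = 1)) t = Z - Z / 2 + 1 := by
    intro t h1 h2
    have hz1 : 1 ≤ Z / 2 := by omega
    have hσt : σ t = 1 := (hσ_eq t).mpr (Or.inr ⟨h1, h2⟩)
    unfold pD
    apply sInf_eq_of
    · refine ⟨?_, h1, ?_, ?_⟩
      · simp only [max_le_iff]; omega
      · simp only [decide_eq_false_iff_not]; omega
      · rw [hσt, hσ_eq]; right; omega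
    · intro s hs
      obtain ⟨hA, hB, hC, hD⟩ := hs
      simp only [decide_eq_false_iff_not] at hC
      rw [hσt, hσ_eq] at hD
      omega
  have hsum : ∀ (b : ℕ → Bool),
      latN Z Z σ b = (if σ 1 = 0 ∨ b 1 then 0 else Z - (1 - pD Z σ b 1)) +
        ∑ i ∈ Finset.range (Z / 2),
          (if σ (1 + ((Z - Z / 2) + i)) = 0 ∨ b (1 + ((Z - Z / 2) + i)) then 0
            else Z - ((1 + ((Z - Z / 2) + i)) - pD Z σ b (1 + ((Z - Z / 2) + i)))) := by
    intro b
    have h1 : latN Z Z σ b = ∑ t ∈ Finset.Icc 1 Z,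
        (if σ t = 0 ∨ b t then 0 else Z - (t - pD Z σ b t)) := rfl
    rw [h1, ← Finset.Ico_add_one_right_eq_Icc, Finset.sum_Ico_eq_sum_range]
    have hZsplit : Z + 1 - 1 = (Z - Z / 2) + Z / 2 := by omega
    rw [hZsplit, Finset.sum_range_add]
    congr 1
    rw [Finset.sum_eq_single_of_mem 0 (by simp; omega)]
    intro i hi hi0
    simp only [Finset.mem_range] at hi
    have : σ (1 + i) = 0 := by
      apply hσ_eq0
      intro h
      rw [hσ_eq] at h
      omega
    simp [this]
  have hσ1 : σ 1 = 1 := (hσ_eq 1).mpr (Or.inl rfl)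
  rcases Nat.eq_zero_or_pos (Z / 2) with hz0 | hzpos
  · have hZ1 : Z = 1 := by omega
    constructor
    · rw [hsum]
      simp only [hz0, Finset.range_zero, Finset.sum_empty, add_zero]
      rw [pD1 1 le_rfl hZ hσ1, if_neg (by simp [hσ1])]
      omega
    · rw [hsum]
      simp only [hz0, Finset.range_zero, Finset.sum_empty, add_zero]
      rw [if_pos (by simp)]
      omega
  · constructor
    · rw [hsum]
      rw [pD1 1 le_rfl hZ hσ1, if_neg (by simp [hσ1])]
      have hterm : ∀ i ∈ Finset.range (Z / 2),
          (if σ (1 + ((Z - Z / 2) + i)) = 0 ∨ (fun _ : ℕ => false) (1 + ((Z - Z / 2) + i)) then 0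
            else Z - ((1 + ((Z - Z / 2) + i)) - pD Z σ (fun _ => false) (1 + ((Z - Z / 2) + i))))
            = Z / 2 - i := by
        intro i hi
        simp only [Finset.mem_range] at hi
        have hσt : σ (1 + ((Z - Z / 2) + i)) = 1 := by rw [hσ_eq]; omega
        rw [pD1 _ (by omega) (by omega) hσt, if_neg (by simp [hσt])]
        omega
      rw [Finset.sum_congr rfl hterm, gauss_rev]
      omega
    · rw [hsum]
      rw [if_pos (by simp)]
      have hterm : ∀ i ∈ Finset.range (Z / 2),
          (if σ (1 + ((Z - Z / 2) + i)) = 0 ∨ (fun t : ℕ => decide (t = 1)) (1 + ((Z - Z / 2) + i)) then 0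
            else Z - ((1 + ((Z - Z / 2) + i)) - pD Z σ (fun t => decide (t = 1)) (1 + ((Z - Z / 2) + i))))
            = Z - i := by
        intro i hi
        simp only [Finset.mem_range] at hi
        have hσt : σ (1 + ((Z - Z / 2) + i)) = 1 := by rw [hσ_eq]; omega
        rw [pD2 _ (by omega) (by omega), if_neg (by simp [hσt]; omega)]
        omega
      rw [Finset.sum_congr rfl hterm]
      have hsplit : ∀ i ∈ Finset.range (Z / 2), Z - i = (Z - Z / 2) + (Z / 2 - i) := by
        intro i hi
        simp only [Finset.mem_range] at hi
        omega
      rw [Finset.sum_congr rfl hsplit, Finset.sum_add_distrib, Finset.sum_const,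
        Finset.card_range, gauss_rev, smul_eq_mul]
      have ha : Z / 2 * (Z - Z / 2) + Z / 2 * (Z / 2) = Z / 2 * Z := by
        have h : (Z - Z / 2) + Z / 2 = Z := by omega
        calc Z / 2 * (Z - Z / 2) + Z / 2 * (Z / 2) = Z / 2 * ((Z - Z / 2) + Z / 2) := by ring
        _ = Z / 2 * Z := by rw [h]
      have hb : Z / 2 * (Z / 2 + 1) = Z / 2 * (Z / 2) + Z / 2 := by ring
      have hc : (Z + 1) * (Z / 2) = Z / 2 * Z + Z / 2 := by ring
      have h2 : Z / 2 * (Z / 2 + 1) % 2 = 0 := Nat.even_iff.mp (Nat.even_mul_succ_self _)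
      omega
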